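/- (Katriel's q-analogue of Spivey's formula.) For all natural numbers n, m: B_q[n+m] = Σ_{r=0}^{n} Σ_{j=0}^{m} S_q[m,j] · q^{rj} · C(n,r) · B_q[r] · ([j]_q)^{n−r}, where C(n,r) is the ordinary binomial coefficient. -/

import Mathlib

/-- The `q`-bracket `[t]_q = (q^t - 1)/(q - 1)` (real exponentiation). -/
noncomputable def qBracket (q t : ℝ) : ℝ := (q ^ t - 1) / (q - 1)

/-- The `q`-Stirling numbers of the second kind `S_q[n,k]`. -/
noncomputable def qStirling (q : ℝ) : ℕ → ℕ → ℝ
  | 0, 0 => 1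
  | 0, _ + 1 => 0
  | _ + 1, 0 => 0
  | n + 1, k + 1 =>
    if k + 1 ≤ n + 1 then
      q ^ k * qStirling q n k + qBracket q ((k : ℝ) + 1) * qStirling q n (k + 1)
    else 0

/-- The `q`-Bell numbers `B_q[n]`. -/
noncomputable def qBell (q : ℝ) (n : ℕ) : ℝ :=
  ∑ k ∈ Finset.range (n + 1), qStirling q n k

section
variable (q : ℝ) (hq : 0 < q) (hq1 : q ≠ 1)

lemma qBracket_nat (j : ℕ) : qBracket q (j : ℝ) = (q ^ j - 1) / (q - 1) := by
  unfold qBracket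
  rw [Real.rpow_natCast]

lemma qBracket_nat_zero : qBracket q ((0 : ℕ) : ℝ) = 0 := by
  rw [qBracket_nat]; simp

lemma qBracket_nat_succ (hq1 : q ≠ 1) (j : ℕ) :
    qBracket q ((j + 1 : ℕ) : ℝ) = qBracket q (j : ℝ) + q ^ j := by
  have h1 : q - 1 ≠ 0 := sub_ne_zero.mpr hq1
  rw [qBracket_nat, qBracket_nat]
  field_simp
  ring

lemma qStirling_succ_succ (n k : ℕ) (h : k ≤ n) :
    qStirling q (n + 1) (k + 1)
      = q ^ k * qStirling q n k + qBracket q ((k : ℝ) + 1) * qStirling q n (k + 1) := by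
  rw [qStirling, if_pos (by omega)]

lemma qStirling_eq_zero {n k : ℕ} (h : n < k) : qStirling q n k = 0 := by
  match n, k with
  | 0, k + 1 => rfl
  | n + 1, k + 1 => rw [qStirling, if_neg (by omega)]

lemma qStirling_zero_succ (n : ℕ) : qStirling q (n + 1) 0 = 0 := rfl

lemma qStirling_one_one : qStirling q 1 1 = 1 := by
  rw [qStirling]
  simp [qStirling, qStirling_eq_zero q (by norm_num : (0:ℕ) < 1)]

lemma qBell_zero : qBell q 0 = 1 := by simp [qBell, qStirling]

end

open Finset in
lemma stirling_step (q : ℝ) (m : ℕ) (Y : ℕ → ℝ) :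
    ∑ j ∈ range (m + 2), qStirling q (m + 1) j * Y j
      = ∑ j ∈ range (m + 1), q ^ j * qStirling q m j * Y (j + 1)
      + ∑ j ∈ range (m + 1), qBracket q (j : ℝ) * qStirling q m j * Y j := by
  rw [Finset.sum_range_succ' (fun j => qStirling q (m + 1) j * Y j)]
  rw [qStirling_zero_succ, zero_mul, add_zero]
  have h1 : ∀ j ∈ range (m + 1),
      qStirling q (m + 1) (j + 1) * Y (j + 1)
        = q ^ j * qStirling q m j * Y (j + 1)
          + qBracket q ((j + 1 : ℕ) : ℝ) * qStirling q m (j + 1) * Y (j + 1) := by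
    intro j hj
    rw [qStirling_succ_succ q m j (by simpa using Finset.mem_range_succ_iff.mp hj)]
    push_cast
    ring
  rw [Finset.sum_congr rfl h1, Finset.sum_add_distrib]
  congr 1
  have h2 : ∑ j ∈ range (m + 1), qBracket q (j : ℝ) * qStirling q m j * Y j
      = ∑ j ∈ range m, qBracket q ((j + 1 : ℕ) : ℝ) * qStirling q m (j + 1) * Y (j + 1) := by
    rw [Finset.sum_range_succ' (fun j => qBracket q (j : ℝ) * qStirling q m j * Y j)]
    rw [qBracket_nat_zero]
    simp
  rw [h2, Finset.sum_range_succ,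
    qStirling_eq_zero q (Nat.lt_succ_self m)]
  simp

open Finset in
lemma claim_lemma (q : ℝ) (hq : 0 < q) (hq1 : q ≠ 1) (n : ℕ)
    (hB1 : ∀ r, r ≤ n → qBell q (r + 1)
      = ∑ i ∈ range (r + 1), (r.choose i : ℝ) * q ^ i * qBell q i)
    (j : ℕ) :
    ∑ r ∈ range (n + 1), (n.choose r : ℝ) * q ^ (r * j) * qBell q (r + 1)
        * qBracket q (j : ℝ) ^ (n - r)
      = ∑ r ∈ range (n + 1), (n.choose r : ℝ) * q ^ (r * (j + 1)) * qBell q r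
        * qBracket q ((j + 1 : ℕ) : ℝ) ^ (n - r) := by
  have key : ∀ r ∈ range (n + 1),
      (n.choose r : ℝ) * q ^ (r * j) * qBell q (r + 1) * qBracket q (j : ℝ) ^ (n - r)
        = ∑ i ∈ range (n + 1), (n.choose r : ℝ) * q ^ (r * j)
            * ((r.choose i : ℝ) * q ^ i * qBell q i) * qBracket q (j : ℝ) ^ (n - r) := by
    intro r hr
    have hrn : r ≤ n := Finset.mem_range_succ_iff.mp hr
    rw [hB1 r hrn, Finset.mul_sum, Finset.sum_mul]
    rw [Finset.sum_subset (by rw [Finset.range_subset_range]; omega :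
        range (r + 1) ⊆ range (n + 1))]
    intro i _ hi
    simp only [Finset.mem_range, not_lt] at hi
    rw [Nat.choose_eq_zero_of_lt (show r < i by omega)]
    simp
  rw [Finset.sum_congr rfl key, Finset.sum_comm]
  apply Finset.sum_congr rfl
  intro i hi
  have hin : i ≤ n := Finset.mem_range_succ_iff.mp hi
  -- restrict inner sum to Ico i (n+1)
  have hres : ∑ r ∈ range (n + 1), (n.choose r : ℝ) * q ^ (r * j)
        * ((r.choose i : ℝ) * q ^ i * qBell q i) * qBracket q (j : ℝ) ^ (n - r)
      = ∑ r ∈ Finset.Ico i (n + 1), (n.choose r : ℝ) * q ^ (r * j)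
        * ((r.choose i : ℝ) * q ^ i * qBell q i) * qBracket q (j : ℝ) ^ (n - r) := by
    refine (Finset.sum_subset ?_ ?_).symm
    · intro x hx
      simp only [Finset.mem_Ico] at hx
      exact Finset.mem_range.mpr hx.2
    · intro r hr hr'
      simp only [Finset.mem_Ico, not_and, not_lt] at hr'
      have : r < i := by
        by_contra hc
        have := hr' (by omega)
        have := Finset.mem_range.mp hr
        omega
      rw [Nat.choose_eq_zero_of_lt this]
      simp
  rw [hres, Finset.sum_Ico_eq_sum_range]
  have hstep : ∀ s ∈ range (n + 1 - i),
      (n.choose (i + s) : ℝ) * q ^ ((i + s) * j)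
          * ((i + s).choose i * q ^ i * qBell q i) * qBracket q (j : ℝ) ^ (n - (i + s))
        = ((n.choose i : ℝ) * q ^ (i * (j + 1)) * qBell q i)
            * (((n - i).choose s : ℝ) * (q ^ j) ^ s * qBracket q (j : ℝ) ^ (n - i - s)) := by
    intro s hs
    simp only [Finset.mem_range] at hs
    have h1 : n.choose (i + s) * (i + s).choose i = n.choose i * (n - i).choose s := by
      rw [Nat.choose_mul (by omega)]
      congr 1
      · congr 1; omega
    have h2 : n - (i + s) = n - i - s := by omega
    rw [h2]
    have h1' : ((n.choose (i + s) : ℝ)) * ((i + s).choose i : ℝ)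
        = ((n.choose i : ℝ)) * ((n - i).choose s : ℝ) := by exact_mod_cast h1
    linear_combination (q ^ ((i + s) * j) * q ^ i * qBell q i
      * qBracket q (j : ℝ) ^ (n - i - s)) * h1'
  rw [Finset.sum_congr rfl hstep, ← Finset.mul_sum]
  have hr : n + 1 - i = (n - i) + 1 := by omega
  rw [hr]
  have hbin : ∑ s ∈ range ((n - i) + 1),
      ((n - i).choose s : ℝ) * (q ^ j) ^ s * qBracket q (j : ℝ) ^ (n - i - s)
      = (q ^ j + qBracket q (j : ℝ)) ^ (n - i) := by
    rw [add_pow]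
    apply Finset.sum_congr rfl
    intro s _
    ring
  rw [hbin]
  have hb : q ^ j + qBracket q (j : ℝ) = qBracket q ((j + 1 : ℕ) : ℝ) := by
    rw [qBracket_nat_succ q hq1]; ring
  rw [hb]

open Finset in
/-- Katriel's `q`-analogue of Spivey's Bell number formula. -/
theorem katriel_q_spivey (q : ℝ) (hq : 0 < q) (hq1 : q ≠ 1) (n m : ℕ) :
    qBell q (n + m)
    = ∑ r ∈ Finset.range (n + 1), ∑ j ∈ Finset.range (m + 1),
        qStirling q m j * q ^ (r * j) * (n.choose r : ℝ) * qBell q r *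
          (qBracket q (j : ℝ)) ^ (n - r) := by
  induction n using Nat.strong_induction_on generalizing m with
  | _ n IH =>
  obtain _ | n := n
  · -- base case n = 0
    rw [Finset.sum_range_one, Nat.zero_add]
    unfold qBell
    apply Finset.sum_congr rfl
    intro j _
    have hb0 : qBell q 0 = 1 := qBell_zero q
    simp [hb0, show qStirling q 0 0 = (1:ℝ) from rfl]
  · -- inductive step
    have hB1 : ∀ r, r ≤ n → qBell q (r + 1)
        = ∑ i ∈ range (r + 1), (r.choose i : ℝ) * q ^ i * qBell q i := by
      intro r hr
      rw [IH r (by omega) 1]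
      apply Finset.sum_congr rfl
      intro i hi
      rw [Finset.sum_range_succ, Finset.sum_range_one]
      have h10 : qStirling q 1 0 = 0 := rfl
      have h11 : qStirling q 1 1 = 1 := qStirling_one_one q
      have hbr1 : qBracket q ((1 : ℕ) : ℝ) = 1 := by
        rw [qBracket_nat, pow_one]
        exact div_self (sub_ne_zero.mpr hq1)
      rw [h10, h11]
      push_cast
      push_cast at hbr1
      rw [hbr1, Nat.mul_one]
      ring
    -- Pascal split
    have step1 : ∑ r ∈ range (n + 1 + 1), ∑ j ∈ range (m + 1),
          qStirling q m j * q ^ (r * j) * ((n+1).choose r : ℝ) * qBell q r *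
            qBracket q (j : ℝ) ^ (n + 1 - r)
        = (∑ r ∈ range (n + 1), ∑ j ∈ range (m + 1),
            qStirling q m j * q ^ ((r+1) * j) * (n.choose (r+1) : ℝ) * qBell q (r+1) *
              qBracket q (j : ℝ) ^ (n - r)
          + ∑ j ∈ range (m + 1),
            qStirling q m j * q ^ (0 * j) * ((n+1).choose 0 : ℝ) * qBell q 0 *
              qBracket q (j : ℝ) ^ (n + 1 - 0))
        + ∑ r ∈ range (n + 1), ∑ j ∈ range (m + 1),
            qStirling q m j * q ^ ((r+1) * j) * (n.choose r : ℝ) * qBell q (r+1) *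
              qBracket q (j : ℝ) ^ (n - r) := by
      rw [Finset.sum_range_succ' (fun r => ∑ j ∈ range (m + 1),
          qStirling q m j * q ^ (r * j) * ((n+1).choose r : ℝ) * qBell q r *
            qBracket q (j : ℝ) ^ (n + 1 - r)) (n+1)]
      rw [add_right_comm]
      congr 1
      rw [← Finset.sum_add_distrib]
      apply Finset.sum_congr rfl
      intro r hr
      rw [← Finset.sum_add_distrib]
      apply Finset.sum_congr rfl
      intro j _
      have he : n + 1 - (r + 1) = n - r := by omega
      rw [he, Nat.choose_succ_succ]
      push_cast
      ring
    -- recombine the A-part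
    have hA : ∑ r ∈ range (n + 1), ∑ j ∈ range (m + 1),
            qStirling q m j * q ^ ((r+1) * j) * (n.choose (r+1) : ℝ) * qBell q (r+1) *
              qBracket q (j : ℝ) ^ (n - r)
          + ∑ j ∈ range (m + 1),
            qStirling q m j * q ^ (0 * j) * ((n+1).choose 0 : ℝ) * qBell q 0 *
              qBracket q (j : ℝ) ^ (n + 1 - 0)
        = ∑ r ∈ range (n + 1), ∑ j ∈ range (m + 1),
            qStirling q m j * q ^ (r * j) * (n.choose r : ℝ) * qBell q r *
              qBracket q (j : ℝ) ^ (n + 1 - r) := by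
      have h2 : ∑ r ∈ range (n + 1 + 1), ∑ j ∈ range (m + 1),
            qStirling q m j * q ^ (r * j) * (n.choose r : ℝ) * qBell q r *
              qBracket q (j : ℝ) ^ (n + 1 - r)
          = ∑ r ∈ range (n + 1), ∑ j ∈ range (m + 1),
            qStirling q m j * q ^ ((r+1) * j) * (n.choose (r+1) : ℝ) * qBell q (r+1) *
              qBracket q (j : ℝ) ^ (n - r)
          + ∑ j ∈ range (m + 1),
            qStirling q m j * q ^ (0 * j) * ((n+1).choose 0 : ℝ) * qBell q 0 *
              qBracket q (j : ℝ) ^ (n + 1 - 0) := by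
        rw [Finset.sum_range_succ' (fun r => ∑ j ∈ range (m + 1),
            qStirling q m j * q ^ (r * j) * (n.choose r : ℝ) * qBell q r *
              qBracket q (j : ℝ) ^ (n + 1 - r)) (n+1)]
        congr 1
        · apply Finset.sum_congr rfl
          intro r hr
          apply Finset.sum_congr rfl
          intro j _
          have he : n + 1 - (r + 1) = n - r := by omega
          rw [he]
        · apply Finset.sum_congr rfl
          intro j _
          norm_num
      rw [← h2, Finset.sum_range_succ]
      have hz : ∑ j ∈ range (m + 1),
          qStirling q m j * q ^ ((n+1) * j) * (n.choose (n+1) : ℝ) * qBell q (n+1) *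
            qBracket q (j : ℝ) ^ (n + 1 - (n+1)) = 0 := by
        apply Finset.sum_eq_zero
        intro j _
        rw [Nat.choose_succ_self]
        simp
      rw [hz, add_zero]
    -- the A-part via the Stirling recurrence
    have hSA : ∑ r ∈ range (n + 1), ∑ j ∈ range (m + 1),
            qStirling q m j * q ^ (r * j) * (n.choose r : ℝ) * qBell q r *
              qBracket q (j : ℝ) ^ (n + 1 - r)
        = (∑ r ∈ range (n + 1), ∑ j ∈ range (m + 1 + 1),
            qStirling q (m+1) j * q ^ (r * j) * (n.choose r : ℝ) * qBell q r *
              qBracket q (j : ℝ) ^ (n - r))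
        - ∑ r ∈ range (n + 1), ∑ j ∈ range (m + 1),
            q ^ j * qStirling q m j * (q ^ (r * (j+1)) * (n.choose r : ℝ) * qBell q r *
              qBracket q ((j + 1 : ℕ) : ℝ) ^ (n - r)) := by
      rw [eq_sub_iff_add_eq, ← Finset.sum_add_distrib]
      apply Finset.sum_congr rfl
      intro r hr
      have hrn : r ≤ n := Finset.mem_range_succ_iff.mp hr
      have hst := stirling_step q m
        (fun j => q ^ (r * j) * (n.choose r : ℝ) * qBell q r * qBracket q (j : ℝ) ^ (n - r))
      have h1 : ∑ j ∈ range (m + 1),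
            qStirling q m j * q ^ (r * j) * (n.choose r : ℝ) * qBell q r *
              qBracket q (j : ℝ) ^ (n + 1 - r)
          = ∑ j ∈ range (m + 1), qBracket q (j : ℝ) * qStirling q m j *
              (q ^ (r * j) * (n.choose r : ℝ) * qBell q r * qBracket q (j : ℝ) ^ (n - r)) := by
        apply Finset.sum_congr rfl
        intro j _
        have he : n + 1 - r = (n - r) + 1 := by omega
        rw [he, pow_succ]
        ring
      have h2 : ∑ j ∈ range (m + 1 + 1),
            qStirling q (m+1) j * q ^ (r * j) * (n.choose r : ℝ) * qBell q r *
              qBracket q (j : ℝ) ^ (n - r)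
          = ∑ j ∈ range (m + 2), qStirling q (m + 1) j *
              (q ^ (r * j) * (n.choose r : ℝ) * qBell q r * qBracket q (j : ℝ) ^ (n - r)) := by
        apply Finset.sum_congr rfl
        intro j _
        ring
      rw [h1, h2, hst]
      ring
    -- the B-part equals the subtracted sum
    have hBD : ∑ r ∈ range (n + 1), ∑ j ∈ range (m + 1),
            qStirling q m j * q ^ ((r+1) * j) * (n.choose r : ℝ) * qBell q (r+1) *
              qBracket q (j : ℝ) ^ (n - r)
        = ∑ r ∈ range (n + 1), ∑ j ∈ range (m + 1),
            q ^ j * qStirling q m j * (q ^ (r * (j+1)) * (n.choose r : ℝ) * qBell q r *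
              qBracket q ((j + 1 : ℕ) : ℝ) ^ (n - r)) := by
      rw [Finset.sum_comm, Finset.sum_comm (s := range (n+1))]
      apply Finset.sum_congr rfl
      intro j _
      calc ∑ r ∈ range (n + 1),
            qStirling q m j * q ^ ((r+1) * j) * (n.choose r : ℝ) * qBell q (r+1) *
              qBracket q (j : ℝ) ^ (n - r)
          = qStirling q m j * q ^ j * ∑ r ∈ range (n + 1),
              (n.choose r : ℝ) * q ^ (r * j) * qBell q (r+1) *
                qBracket q (j : ℝ) ^ (n - r) := by
            rw [Finset.mul_sum]
            apply Finset.sum_congr rfl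
            intro r _
            ring
        _ = qStirling q m j * q ^ j * ∑ r ∈ range (n + 1),
              (n.choose r : ℝ) * q ^ (r * (j+1)) * qBell q r *
                qBracket q ((j + 1 : ℕ) : ℝ) ^ (n - r) := by
            rw [claim_lemma q hq hq1 n hB1 j]
        _ = ∑ r ∈ range (n + 1),
            q ^ j * qStirling q m j * (q ^ (r * (j+1)) * (n.choose r : ℝ) * qBell q r *
              qBracket q ((j + 1 : ℕ) : ℝ) ^ (n - r)) := by
            rw [Finset.mul_sum]
            apply Finset.sum_congr rfl
            intro r _
            ring
    -- the top sum is the q-Bell number by the induction hypothesis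
    have hT : ∑ r ∈ range (n + 1), ∑ j ∈ range (m + 1 + 1),
          qStirling q (m+1) j * q ^ (r * j) * (n.choose r : ℝ) * qBell q r *
            qBracket q (j : ℝ) ^ (n - r) = qBell q (n + (m + 1)) :=
      (IH n (by omega) (m+1)).symm
    rw [step1, hA, hSA, ← hBD]
    rw [hBD, sub_add_cancel, hT]
    congr 1
    omega
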